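/- Let φ : ℝ → ℝ be twice differentiable with bounded first and second derivatives and let m > 0. Then for every x ∈ ℝ and t ∈ [0,1], the function y ↦ F_{φ,m}(y,t) is twice differentiable at x and its second derivative equals E[φ''(x+√t·Z)·W] + m·( E[φ'(x+√t·Z)²·W] − (E[φ'(x+√t·Z)·W])² ), where W = exp(m·φ(x+√t·Z)) / E[exp(m·φ(x+√t·Z))]. -/

import Mathlib

open MeasureTheory ProbabilityTheory Set

/-- `parisiF φ m x t = (1/m) log E[exp (m φ(x + √t Z))]` with `Z` standard Gaussian. -/
noncomputable def parisiF (φ : ℝ → ℝ) (m : ℝ) (x t : ℝ) : ℝ :=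
  (1 / m) * Real.log (∫ z, Real.exp (m * φ (x + Real.sqrt t * z)) ∂(gaussianReal 0 1))

/-- `φ` is twice differentiable with bounded first and second derivatives. -/
def TwiceDiffBounded (φ : ℝ → ℝ) : Prop :=
  Differentiable ℝ φ ∧ Differentiable ℝ (deriv φ) ∧
    (∃ C, ∀ x, |deriv φ x| ≤ C) ∧ (∃ C, ∀ x, |deriv (deriv φ) x| ≤ C)

lemma integrable_exp_gauss (b : ℝ) :
    Integrable (fun z => Real.exp (b * z)) (gaussianReal 0 1) := by
  rw [gaussianReal_of_var_ne_zero 0 one_ne_zero,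
    integrable_withDensity_iff (measurable_gaussianPDF 0 1)
      (ae_of_all _ fun _ => ENNReal.ofReal_lt_top)]
  have h : (fun x => Real.exp (b * x) * (gaussianPDF 0 1 x).toReal)
      = fun x => ((Real.sqrt (2 * Real.pi))⁻¹ * Real.exp (b ^ 2 / 2)) *
          Real.exp (-(1/2) * (x - b) ^ 2) := by
    funext x
    rw [gaussianPDF, ENNReal.toReal_ofReal (gaussianPDFReal_nonneg _ _ _), gaussianPDFReal]
    simp only [NNReal.coe_one, mul_one, sub_zero]
    rw [mul_comm (Real.exp (b * x)), mul_assoc, ← Real.exp_add, mul_assoc, ← Real.exp_add]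
    congr 2
    ring
  rw [h]
  exact ((integrable_exp_neg_mul_sq (by norm_num : (0:ℝ) < 1/2)).comp_sub_right b).const_mul _

lemma integrable_exp_abs_gauss (b : ℝ) :
    Integrable (fun z => Real.exp (b * |z|)) (gaussianReal 0 1) := by
  refine Integrable.mono' ((integrable_exp_gauss b).add (integrable_exp_gauss (-b)))
    (Continuous.aestronglyMeasurable (by continuity)) (ae_of_all _ fun z => ?_)
  rw [Real.norm_eq_abs, abs_of_nonneg (Real.exp_pos _).le]
  simp only [Pi.add_apply]
  rcases abs_cases z with ⟨h, _⟩ | ⟨h, _⟩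
  · rw [h]
    nlinarith [Real.exp_pos (-b * z)]
  · rw [h, show b * -z = -b * z by ring]
    nlinarith [Real.exp_pos (b * z)]

lemma parisi_key (φ : ℝ → ℝ) (hφ : TwiceDiffBounded φ) (m : ℝ) (hm : 0 < m)
    (t : ℝ) (ht : t ∈ Set.Icc (0:ℝ) 1) (y : ℝ) :
    (0 < ∫ z, Real.exp (m * φ (y + Real.sqrt t * z)) ∂(gaussianReal 0 1)) ∧
    HasDerivAt (fun u => ∫ z, Real.exp (m * φ (u + Real.sqrt t * z)) ∂(gaussianReal 0 1))
      (∫ z, m * deriv φ (y + Real.sqrt t * z) * Real.exp (m * φ (y + Real.sqrt t * z))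
        ∂(gaussianReal 0 1)) y ∧
    HasDerivAt (fun u => ∫ z, m * deriv φ (u + Real.sqrt t * z) *
        Real.exp (m * φ (u + Real.sqrt t * z)) ∂(gaussianReal 0 1))
      (∫ z, (m * deriv (deriv φ) (y + Real.sqrt t * z)
          + m ^ 2 * deriv φ (y + Real.sqrt t * z) ^ 2) *
          Real.exp (m * φ (y + Real.sqrt t * z)) ∂(gaussianReal 0 1)) y ∧
    Integrable (fun z => deriv (deriv φ) (y + Real.sqrt t * z) *
        Real.exp (m * φ (y + Real.sqrt t * z))) (gaussianReal 0 1) ∧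
    Integrable (fun z => deriv φ (y + Real.sqrt t * z) ^ 2 *
        Real.exp (m * φ (y + Real.sqrt t * z))) (gaussianReal 0 1) := by
  obtain ⟨hd1, hd2, ⟨C₁, hC₁⟩, ⟨C₂, hC₂⟩⟩ := hφ
  have hcφ : Continuous φ := hd1.continuous
  have hcφ' : Continuous (deriv φ) := hd2.continuous
  set γ := gaussianReal 0 1 with hγ
  set s := Real.sqrt t with hsdef
  have hs0 : 0 ≤ s := Real.sqrt_nonneg t
  have hs1 : s ≤ 1 := Real.sqrt_le_one.mpr ht.2
  have hC₁0 : 0 ≤ C₁ := le_trans (abs_nonneg _) (hC₁ 0)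
  have hC₂0 : 0 ≤ C₂ := le_trans (abs_nonneg _) (hC₂ 0)
  -- Lipschitz bound on φ
  have hLip : ∀ v : ℝ, φ v ≤ |φ 0| + C₁ * |v| := by
    intro v
    have h := Convex.norm_image_sub_le_of_norm_deriv_le (s := (Set.univ : Set ℝ))
      (f := φ) (C := C₁) (fun x _ => hd1 x)
      (fun x _ => by simpa [Real.norm_eq_abs] using hC₁ x) convex_univ
      (Set.mem_univ 0) (Set.mem_univ v)
    simp only [Real.norm_eq_abs, sub_zero] at h
    have h' := (le_abs_self (φ v - φ 0)).trans h
    have h'' := le_abs_self (φ 0)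
    linarith
  set K := Real.exp (m * (|φ 0| + C₁ * (|y| + 1))) with hK
  have hK0 : 0 < K := Real.exp_pos _
  -- domination of the exponential
  have hdom : ∀ z u : ℝ, |u| ≤ |y| + 1 →
      Real.exp (m * φ (u + s * z)) ≤ K * Real.exp (m * C₁ * |z|) := by
    intro z u hu
    rw [hK, ← Real.exp_add]
    apply Real.exp_le_exp.mpr
    have h1 : φ (u + s * z) ≤ |φ 0| + C₁ * |u + s * z| := hLip _
    have hsz : |s * z| ≤ |z| := by
      rw [abs_mul, abs_of_nonneg hs0]
      nlinarith [abs_nonneg z]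
    have h2 : |u + s * z| ≤ (|y| + 1) + |z| :=
      (abs_add_le _ _).trans (by linarith)
    nlinarith [mul_le_mul_of_nonneg_left h1 hm.le,
      mul_le_mul_of_nonneg_left h2 (mul_nonneg hm.le hC₁0)]
  have hbound_int : ∀ c : ℝ, Integrable (fun z => c * Real.exp (m * C₁ * |z|)) γ :=
    fun c => (integrable_exp_abs_gauss _).const_mul c
  -- measurability helpers
  have ma : ∀ u : ℝ, Measurable fun z : ℝ => u + s * z :=
    fun u => measurable_const.add (measurable_id.const_mul s)
  have hmeas_e : ∀ u : ℝ, Continuous fun z : ℝ => Real.exp (m * φ (u + s * z)) := by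
    intro u
    exact Real.continuous_exp.comp ((continuous_const.mul (hcφ.comp
      (continuous_const.add (continuous_const.mul continuous_id)))))
  have hmeas_e1 : ∀ u : ℝ, Continuous fun z : ℝ =>
      m * deriv φ (u + s * z) * Real.exp (m * φ (u + s * z)) := by
    intro u
    exact ((continuous_const.mul (hcφ'.comp
      (continuous_const.add (continuous_const.mul continuous_id)))).mul (hmeas_e u))
  -- integrability of the basic exponential at any point
  have hint_e : ∀ u : ℝ, |u| ≤ |y| + 1 →
      Integrable (fun z => Real.exp (m * φ (u + s * z))) γ := by
    intro u hu
    refine Integrable.mono' (hbound_int K) (hmeas_e u).aestronglyMeasurable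
      (ae_of_all _ fun z => ?_)
    rw [Real.norm_eq_abs, abs_of_nonneg (Real.exp_pos _).le]
    exact hdom z u hu
  have hyball : ∀ u : ℝ, u ∈ Metric.ball y 1 → |u| ≤ |y| + 1 := by
    intro u hu
    rw [Metric.mem_ball, Real.dist_eq] at hu
    have := abs_sub_abs_le_abs_sub u y
    linarith [this.trans hu.le]
  -- pointwise derivatives
  have hder1 : ∀ u z : ℝ, HasDerivAt (fun v => Real.exp (m * φ (v + s * z)))
      (m * deriv φ (u + s * z) * Real.exp (m * φ (u + s * z))) u := by
    intro u z
    have h0 : HasDerivAt (fun v : ℝ => v + s * z) 1 u := (hasDerivAt_id u).add_const _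
    have h1 : HasDerivAt (fun v => φ (v + s * z)) (deriv φ (u + s * z)) u := by
      simpa [Function.comp_def] using ((hd1 (u + s * z)).hasDerivAt).comp u h0
    have h2 := (h1.const_mul m).exp
    convert h2 using 1
    ring
  have hder2 : ∀ u z : ℝ, HasDerivAt
      (fun v => m * deriv φ (v + s * z) * Real.exp (m * φ (v + s * z)))
      ((m * deriv (deriv φ) (u + s * z) + m ^ 2 * deriv φ (u + s * z) ^ 2) *
        Real.exp (m * φ (u + s * z))) u := by
    intro u z
    have h0 : HasDerivAt (fun v : ℝ => v + s * z) 1 u := (hasDerivAt_id u).add_const _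
    have h3 : HasDerivAt (fun v => deriv φ (v + s * z)) (deriv (deriv φ) (u + s * z)) u := by
      simpa [Function.comp_def] using ((hd2 (u + s * z)).hasDerivAt).comp u h0
    have h4 : HasDerivAt (fun v => m * deriv φ (v + s * z) * Real.exp (m * φ (v + s * z))) _ u :=
      (h3.const_mul m).mul (hder1 u z)
    convert h4 using 1
    ring
  -- first derivative of G
  have hG1 := hasDerivAt_integral_of_dominated_loc_of_deriv_le (μ := γ)
    (F := fun u z => Real.exp (m * φ (u + s * z)))
    (F' := fun u z => m * deriv φ (u + s * z) * Real.exp (m * φ (u + s * z)))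
    (bound := fun z => (m * C₁ * K) * Real.exp (m * C₁ * |z|))
    (Metric.ball_mem_nhds y one_pos)
    (Filter.Eventually.of_forall fun u => (hmeas_e u).aestronglyMeasurable)
    (hint_e y (by linarith))
    ((hmeas_e1 y).aestronglyMeasurable)
    (ae_of_all _ fun z u hu => by
      have h1 := hdom z u (hyball u hu)
      rw [Real.norm_eq_abs, abs_mul, abs_mul, abs_of_nonneg hm.le,
        abs_of_nonneg (Real.exp_pos _).le]
      have h2 : |deriv φ (u + s * z)| ≤ C₁ := hC₁ _
      have h3 : (0:ℝ) < Real.exp (m * φ (u + s * z)) := Real.exp_pos _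
      beta_reduce
      nlinarith [mul_le_mul_of_nonneg_left (mul_le_mul h2 h1 h3.le hC₁0) hm.le])
    (hbound_int _)
    (ae_of_all _ fun z u _ => hder1 u z)
  -- second derivative
  have hmeas_F2 : AEStronglyMeasurable (fun z =>
      (m * deriv (deriv φ) (y + s * z) + m ^ 2 * deriv φ (y + s * z) ^ 2) *
        Real.exp (m * φ (y + s * z))) γ := by
    refine (Measurable.aestronglyMeasurable ?_)
    exact ((((measurable_deriv (deriv φ)).comp (ma y)).const_mul m).add
      (((hcφ'.measurable.comp (ma y)).pow_const 2).const_mul (m ^ 2))).mul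
      ((hmeas_e y).measurable)
  have hG2 := hasDerivAt_integral_of_dominated_loc_of_deriv_le (μ := γ)
    (F := fun u z => m * deriv φ (u + s * z) * Real.exp (m * φ (u + s * z)))
    (F' := fun u z => (m * deriv (deriv φ) (u + s * z) + m ^ 2 * deriv φ (u + s * z) ^ 2) *
        Real.exp (m * φ (u + s * z)))
    (bound := fun z => ((m * C₂ + m ^ 2 * C₁ ^ 2) * K) * Real.exp (m * C₁ * |z|))
    (Metric.ball_mem_nhds y one_pos)
    (Filter.Eventually.of_forall fun u => (hmeas_e1 u).aestronglyMeasurable)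
    (by
      refine Integrable.mono' (hbound_int (m * C₁ * K))
        (hmeas_e1 y).aestronglyMeasurable (ae_of_all _ fun z => ?_)
      have h1 := hdom z y (by linarith)
      rw [Real.norm_eq_abs, abs_mul, abs_mul, abs_of_nonneg hm.le,
        abs_of_nonneg (Real.exp_pos _).le]
      have h2 : |deriv φ (y + s * z)| ≤ C₁ := hC₁ _
      have h3 : (0:ℝ) < Real.exp (m * φ (y + s * z)) := Real.exp_pos _
      nlinarith [mul_le_mul_of_nonneg_left (mul_le_mul h2 h1 h3.le hC₁0) hm.le])
    hmeas_F2
    (ae_of_all _ fun z u hu => by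
      have h1 := hdom z u (hyball u hu)
      rw [Real.norm_eq_abs, abs_mul, abs_of_nonneg (Real.exp_pos _).le]
      have h2 : |deriv φ (u + s * z)| ≤ C₁ := hC₁ _
      have h2' : |deriv (deriv φ) (u + s * z)| ≤ C₂ := hC₂ _
      have h3 : (0:ℝ) < Real.exp (m * φ (u + s * z)) := Real.exp_pos _
      have h4 : |m * deriv (deriv φ) (u + s * z) + m ^ 2 * deriv φ (u + s * z) ^ 2|
          ≤ m * C₂ + m ^ 2 * C₁ ^ 2 := by
        refine (abs_add_le _ _).trans ?_
        rw [abs_mul, abs_mul, abs_of_nonneg hm.le, abs_of_nonneg (sq_nonneg m)]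
        have h5 : |deriv φ (u + s * z) ^ 2| ≤ C₁ ^ 2 := by
          rw [abs_of_nonneg (sq_nonneg _), ← sq_abs]
          exact pow_le_pow_left₀ (abs_nonneg _) h2 2
        nlinarith [mul_le_mul_of_nonneg_left h2' hm.le,
          mul_le_mul_of_nonneg_left h5 (sq_nonneg m)]
      have h6 : (0:ℝ) ≤ m * C₂ + m ^ 2 * C₁ ^ 2 := by positivity
      beta_reduce
      nlinarith [mul_le_mul h4 h1 h3.le h6])
    (hbound_int _)
    (ae_of_all _ fun z u _ => hder2 u z)
  refine ⟨integral_exp_pos (hint_e y (by linarith)), hG1.2, hG2.2, ?_, ?_⟩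
  · refine Integrable.mono' (hbound_int (C₂ * K))
      (((((measurable_deriv (deriv φ)).comp (ma y))).mul
        ((hmeas_e y).measurable)).aestronglyMeasurable) (ae_of_all _ fun z => ?_)
    have h1 := hdom z y (by linarith)
    rw [Real.norm_eq_abs, abs_mul, abs_of_nonneg (Real.exp_pos _).le]
    have h2 : |deriv (deriv φ) (y + s * z)| ≤ C₂ := hC₂ _
    have h3 : (0:ℝ) < Real.exp (m * φ (y + s * z)) := Real.exp_pos _
    nlinarith [mul_le_mul h2 h1 h3.le hC₂0]
  · refine Integrable.mono' (hbound_int (C₁ ^ 2 * K))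
      ((((hcφ'.comp (continuous_const.add (continuous_const.mul continuous_id))).pow 2).mul
        (hmeas_e y)).aestronglyMeasurable) (ae_of_all _ fun z => ?_)
    have h1 := hdom z y (by linarith)
    rw [Real.norm_eq_abs, abs_mul, abs_of_nonneg (Real.exp_pos _).le]
    have h2 : |deriv φ (y + s * z)| ≤ C₁ := hC₁ _
    have h3 : (0:ℝ) < Real.exp (m * φ (y + s * z)) := Real.exp_pos _
    have h4 : |deriv φ (y + s * z) ^ 2| ≤ C₁ ^ 2 := by
      rw [abs_of_nonneg (sq_nonneg _), ← sq_abs]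
      exact pow_le_pow_left₀ (abs_nonneg _) h2 2
    nlinarith [mul_le_mul h4 h1 h3.le (by positivity : (0:ℝ) ≤ C₁ ^ 2)]

theorem parisiF_second_deriv (φ : ℝ → ℝ) (hφ : TwiceDiffBounded φ) (m : ℝ) (hm : 0 < m) :
    ∀ (x : ℝ), ∀ t ∈ Set.Icc (0 : ℝ) 1,
      (∀ y : ℝ, DifferentiableAt ℝ (fun z => parisiF φ m z t) y) ∧
      HasDerivAt (deriv (fun y => parisiF φ m y t))
        ((∫ z, deriv (deriv φ) (x + Real.sqrt t * z) *
            (Real.exp (m * φ (x + Real.sqrt t * z)) /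
              ∫ w, Real.exp (m * φ (x + Real.sqrt t * w)) ∂(gaussianReal 0 1))
              ∂(gaussianReal 0 1)) +
          m * ((∫ z, (deriv φ (x + Real.sqrt t * z)) ^ 2 *
                  (Real.exp (m * φ (x + Real.sqrt t * z)) /
                    ∫ w, Real.exp (m * φ (x + Real.sqrt t * w)) ∂(gaussianReal 0 1))
                  ∂(gaussianReal 0 1)) -
                (∫ z, deriv φ (x + Real.sqrt t * z) *
                  (Real.exp (m * φ (x + Real.sqrt t * z)) /
                    ∫ w, Real.exp (m * φ (x + Real.sqrt t * w)) ∂(gaussianReal 0 1))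
                  ∂(gaussianReal 0 1)) ^ 2)) x := by
  intro x t ht
  set γ := gaussianReal 0 1 with hγ
  set s := Real.sqrt t with hsdef
  set G : ℝ → ℝ := fun u => ∫ z, Real.exp (m * φ (u + s * z)) ∂γ with hGdef
  set G₁ : ℝ → ℝ := fun u => ∫ z, m * deriv φ (u + s * z) * Real.exp (m * φ (u + s * z)) ∂γ
    with hG₁def
  have key := parisi_key φ hφ m hm t ht
  -- derivative of parisiF at every point
  have hF : ∀ y : ℝ, HasDerivAt (fun u => parisiF φ m u t) ((1 / m) * (G₁ y / G y)) y := by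
    intro y
    obtain ⟨hpos, hG, _, _, _⟩ := key y
    have h := (hG.log hpos.ne').const_mul (1 / m)
    simpa [parisiF] using h
  refine ⟨fun y => (hF y).differentiableAt, ?_⟩
  have hderiv : deriv (fun u => parisiF φ m u t) = fun y => (1 / m) * (G₁ y / G y) :=
    funext fun y => (hF y).deriv
  rw [hderiv]
  obtain ⟨hpos, hG, hG2, hint2, hint1⟩ := key x
  have h2 : HasDerivAt (fun y => (1 / m) * (G₁ y / G y))
      ((1 / m) * (((∫ z, (m * deriv (deriv φ) (x + s * z)
          + m ^ 2 * deriv φ (x + s * z) ^ 2) * Real.exp (m * φ (x + s * z)) ∂γ) * G x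
        - G₁ x * G₁ x) / G x ^ 2)) x :=
    ((hG2.div hG hpos.ne')).const_mul (1 / m)
  convert h2 using 1
  -- value computation
  set T := G x with hT
  set A0 := ∫ z, deriv φ (x + s * z) * Real.exp (m * φ (x + s * z)) ∂γ with hA0
  set A1 := ∫ z, deriv φ (x + s * z) ^ 2 * Real.exp (m * φ (x + s * z)) ∂γ with hA1
  set A2 := ∫ z, deriv (deriv φ) (x + s * z) * Real.exp (m * φ (x + s * z)) ∂γ with hA2
  have e0 : (∫ z, deriv φ (x + s * z) * (Real.exp (m * φ (x + s * z)) / T) ∂γ) = A0 * T⁻¹ := by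
    simp_rw [div_eq_mul_inv, ← mul_assoc]
    rw [integral_mul_const]
  have e1 : (∫ z, deriv φ (x + s * z) ^ 2 * (Real.exp (m * φ (x + s * z)) / T) ∂γ)
      = A1 * T⁻¹ := by
    simp_rw [div_eq_mul_inv, ← mul_assoc]
    rw [integral_mul_const]
  have e2 : (∫ z, deriv (deriv φ) (x + s * z) * (Real.exp (m * φ (x + s * z)) / T) ∂γ)
      = A2 * T⁻¹ := by
    simp_rw [div_eq_mul_inv, ← mul_assoc]
    rw [integral_mul_const]
  have eG1 : G₁ x = m * A0 := by
    rw [hG₁def]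
    simp_rw [mul_assoc]
    rw [integral_const_mul]
  have eG2 : (∫ z, (m * deriv (deriv φ) (x + s * z)
      + m ^ 2 * deriv φ (x + s * z) ^ 2) * Real.exp (m * φ (x + s * z)) ∂γ)
      = m * A2 + m ^ 2 * A1 := by
    simp_rw [add_mul, mul_assoc]
    rw [integral_add ((hint2.const_mul m)) ((hint1.const_mul (m ^ 2))),
      integral_const_mul, integral_const_mul]
  rw [e0, e1, e2, eG1, eG2]
  have hT0 : T ≠ 0 := hpos.ne'
  field_simp
  ring
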